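/- arXiv:1407.7878 — 3 statements merged into one kernel-verified Lean document; each statement's English description precedes it below -/
import Mathlib

section
/- Let R > 0 and let g : ℂ → ℂ be analytic on the open ball B(0,R) with g(0) = 0 and |g'(0)| > 1. Let μ ∈ ℂ with 0 < |μ| < 1, and suppose that the multiplicative semigroup generated by μ and g'(0), i.e. the set {μ^a · (g'(0))^b : a, b ∈ ℕ, a + b ≥ 1}, is dense in ℂ ∖ {0}. Then for every ν ∈ ℂ ∖ {0}, every ρ with 0 < ρ < R, and every ε > 0, there exist natural numbers r, s, t such that for every z with |z| ≤ ρ, the points μ^{r+s}·z, g(μ^{r+s}·z), g^{[2]}(μ^{r+s}·z), …, g^{[t-1]}(μ^{r+s}·z) all lie in B(0,R) (so the iterate g^{[t]}(μ^{r+s}·z) is defined), and |μ^{-s} · g^{[t]}(μ^{r+s}·z) − ν·z| < ε. -/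
lemma la_quad (R : ℝ) (hR : 0 < R) (g : ℂ → ℂ)
    (hg : DifferentiableOn ℂ g (Metric.ball (0 : ℂ) R)) (hg0 : g 0 = 0) :
    ∃ C : ℝ, 0 ≤ C ∧ ∃ δ₀ : ℝ, 0 < δ₀ ∧
      ∀ w : ℂ, ‖w‖ ≤ δ₀ →
        ‖g w - deriv g 0 * w‖ ≤ C * (‖w‖)^2 := by
  have hA : AnalyticAt ℂ g 0 := hg.analyticAt (Metric.ball_mem_nhds 0 hR)
  obtain ⟨p, hp⟩ := hA
  have hO := hp.isBigO_sub_partialSum_pow 2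
  have hps : ∀ y : ℂ, p.partialSum 2 y = deriv g 0 * y := by
    intro y
    have h0 : p 0 (fun _ => y) = g 0 := hp.coeff_zero _
    simp only [FormalMultilinearSeries.partialSum, Finset.sum_range_succ,
      Finset.sum_range_zero, zero_add, h0, hg0,
      FormalMultilinearSeries.apply_eq_pow_smul_coeff, hp.deriv]
    have c0 : p.coeff 0 = 0 := (hp.coeff_zero (fun _ => 1)).trans hg0
    simp [c0, smul_eq_mul]
    ring
  simp only [zero_add] at hO
  rw [Asymptotics.isBigO_iff] at hO
  obtain ⟨C, hC⟩ := hO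
  rw [Metric.eventually_nhds_iff] at hC
  obtain ⟨δ₀, hδ₀, hC'⟩ := hC
  refine ⟨max C 0, le_max_right _ _, δ₀/2, by positivity, fun w hw => ?_⟩
  have := hC' (show dist w 0 < δ₀ by simpa [Complex.dist_eq] using lt_of_le_of_lt hw (by linarith))
  rw [hps w] at this
  rw [Real.norm_of_nonneg (by positivity)] at this
  calc ‖g w - deriv g 0 * w‖ ≤ C * (‖w‖)^2 := this
    _ ≤ max C 0 * (‖w‖)^2 := by
        apply mul_le_mul_of_nonneg_right (le_max_left _ _) (by positivity)

lemma la_key (g : ℂ → ℂ) (l : ℂ) (C δ δ₀ : ℝ) (hC : 0 ≤ C) (hL : 1 < ‖l‖)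
    (hquad : ∀ w : ℂ, ‖w‖ ≤ δ₀ → ‖g w - l * w‖ ≤ C * (‖w‖)^2)
    (hδδ₀ : δ ≤ δ₀) (hDδ : (4*C/(‖l‖ - 1)) * δ ≤ 2) :
    ∀ (k : ℕ) (w : ℂ), 2 * (‖l‖)^k * ‖w‖ ≤ δ →
      ‖g^[k] w - l^k * w‖
        ≤ (4*C/(‖l‖ - 1)) * (‖l‖)^(2*k) * (‖w‖)^2 ∧
      ‖g^[k] w‖ ≤ 2 * (‖l‖)^k * ‖w‖ := by
  set L := ‖l‖ with hLdef
  set D := 4*C/(L - 1) with hDdef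
  have hD : 0 ≤ D := div_nonneg (by linarith) (by linarith)
  have hDL : D * (L - 1) = 4*C := div_mul_cancel₀ _ (by linarith)
  intro k
  induction k with
  | zero =>
    intro w h
    constructor
    · simp only [Function.iterate_zero_apply, pow_zero, one_mul, sub_self, norm_zero,
        Nat.mul_zero]
      have := norm_nonneg w
      nlinarith
    · simp only [Function.iterate_zero_apply, pow_zero, one_mul]
      have := norm_nonneg w
      linarith
  | succ k ih =>
    intro w h
    have hwnn : 0 ≤ ‖w‖ := norm_nonneg w
    have hLpos : 0 < L := by linarith
    have hLk : (0:ℝ) < L^k := pow_pos hLpos k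
    have hLkk : L^k ≤ L^(k+1) := pow_le_pow_right₀ (by linarith) (Nat.le_succ k)
    have hmono : 2 * L^k * ‖w‖ ≤ δ := by nlinarith
    obtain ⟨ih1, ih2⟩ := ih w hmono
    have hEδ : ‖g^[k] w‖ ≤ δ₀ := le_trans ih2 (le_trans hmono hδδ₀)
    have hq := hquad (g^[k] w) hEδ
    have hEnn : 0 ≤ ‖g^[k] w‖ := norm_nonneg _
    have htri : ‖g (g^[k] w) - l^(k+1) * w‖
        ≤ ‖g (g^[k] w) - l * g^[k] w‖ + ‖l * g^[k] w - l^(k+1) * w‖ := by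
      have := norm_add_le (g (g^[k] w) - l * g^[k] w) (l * g^[k] w - l^(k+1) * w)
      rwa [sub_add_sub_cancel] at this
    have h2 : ‖l * g^[k] w - l^(k+1) * w‖ = L * ‖g^[k] w - l^k * w‖ := by
      rw [show l * g^[k] w - l^(k+1) * w = l * (g^[k] w - l^k * w) by ring, norm_mul]
    have e1 : L^(2*(k+1)) = L^(2*k) * (L * L) := by
      rw [show 2*(k+1) = 2*k + 2 by ring, pow_add]; ring
    have hsq : (‖g^[k] w‖)^2 ≤ 4 * L^(2*k) * (‖w‖)^2 := by
      have := mul_self_le_mul_self hEnn ih2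
      have e2 : L^(2*k) = (L^k)^2 := by rw [mul_comm, pow_mul]
      nlinarith
    have hgoal1 : ‖g^[k+1] w - l^(k+1) * w‖ ≤ D * L^(2*(k+1)) * (‖w‖)^2 := by
      rw [Function.iterate_succ_apply']
      have hLk2 : (0:ℝ) < L^(2*k) := pow_pos hLpos _
      have hw2 : (0:ℝ) ≤ (‖w‖)^2 := sq_nonneg _
      calc ‖g (g^[k] w) - l^(k+1) * w‖
          ≤ ‖g (g^[k] w) - l * g^[k] w‖ + ‖l * g^[k] w - l^(k+1) * w‖ := htri
        _ ≤ C * (‖g^[k] w‖)^2 + L * (D * L^(2*k) * (‖w‖)^2) := by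
            rw [h2]; gcongr
        _ ≤ D * L^(2*(k+1)) * (‖w‖)^2 := by
            rw [e1]
            nlinarith [mul_le_mul_of_nonneg_left hsq hC, sq_nonneg (L-1),
              mul_nonneg (mul_nonneg hD hLk2.le) hw2]
    refine ⟨hgoal1, ?_⟩
    have habs : ‖l^(k+1) * w‖ = L^(k+1) * ‖w‖ := by
      rw [norm_mul, norm_pow]
    have htri2 : ‖g^[k+1] w‖
        ≤ L^(k+1) * ‖w‖ + D * L^(2*(k+1)) * (‖w‖)^2 := by
      have := norm_add_le (g^[k+1] w - l^(k+1) * w) (l^(k+1) * w)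
      rw [sub_add_cancel, habs] at this
      linarith
    have e2 : L^(2*(k+1)) = (L^(k+1))^2 := by rw [mul_comm, pow_mul]
    have hx : 0 ≤ L^(k+1) * ‖w‖ := by positivity
    have hDx : D * (L^(k+1) * ‖w‖) ≤ 1 := by
      have := mul_le_mul_of_nonneg_left h hD
      linarith
    have : D * L^(2*(k+1)) * (‖w‖)^2 ≤ L^(k+1) * ‖w‖ := by
      rw [e2]; nlinarith [mul_le_mul_of_nonneg_right hDx hx]
    linarith

/-- **Lemma 6 (Ilyashenko).** An expanding analytic germ `g` at `0`, pre- and post-composed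
with contracting linear maps `z ↦ μ^k z`, approximates any linear map `z ↦ ν z`
uniformly on a fixed neighborhood of `0`, provided the multiplicative semigroup generated
by `μ` and `g'(0)` is dense in `ℂ \ {0}`. -/
theorem linear_approximation
    (R : ℝ) (hR : 0 < R) (g : ℂ → ℂ)
    (hg : DifferentiableOn ℂ g (Metric.ball (0 : ℂ) R))
    (hg0 : g 0 = 0) (hg' : 1 < ‖deriv g 0‖)
    (μ : ℂ) (hμ0 : 0 < ‖μ‖) (hμ1 : ‖μ‖ < 1)
    (hdense : ∀ w : ℂ, w ≠ 0 →
      w ∈ closure {x : ℂ | ∃ a b : ℕ, 1 ≤ a + b ∧ x = μ ^ a * (deriv g 0) ^ b}) :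
    ∀ ν : ℂ, ν ≠ 0 → ∀ ρ : ℝ, 0 < ρ → ρ < R → ∀ ε : ℝ, 0 < ε →
      ∃ r s t : ℕ, ∀ z : ℂ, ‖z‖ ≤ ρ →
        (∀ k < t, g^[k] (μ ^ (r + s) * z) ∈ Metric.ball (0 : ℂ) R) ∧
        ‖(μ ^ s)⁻¹ * g^[t] (μ ^ (r + s) * z) - ν * z‖ < ε := by
  intro ν hν ρ hρ hρR ε hε
  obtain ⟨C, hC, δ₀, hδ₀, hquad⟩ := la_quad R hR g hg hg0
  set l : ℂ := deriv g 0 with hldef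
  obtain ⟨L, hLdef⟩ : ∃ x : ℝ, ‖l‖ = x := ⟨_, rfl⟩
  have hL : 1 < L := hLdef ▸ hg'
  have hLpos : (0:ℝ) < L := by linarith
  obtain ⟨D, hDdef⟩ : ∃ x : ℝ, 4*C/(L - 1) = x := ⟨_, rfl⟩
  have hD : 0 ≤ D := hDdef ▸ div_nonneg (by linarith) (by linarith)
  obtain ⟨δ, hδdef⟩ : ∃ x : ℝ, min (min δ₀ (R/2)) (2/(D+1)) = x := ⟨_, rfl⟩
  have hδpos : 0 < δ := by
    rw [← hδdef]
    exact lt_min (lt_min hδ₀ (by linarith)) (by positivity)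
  have hδδ₀ : δ ≤ δ₀ := by
    rw [← hδdef]; exact le_trans (min_le_left _ _) (min_le_left _ _)
  have hδR : δ ≤ R/2 := by
    rw [← hδdef]; exact le_trans (min_le_left _ _) (min_le_right _ _)
  have hDδ : D * δ ≤ 2 := by
    have h1 : δ ≤ 2/(D+1) := by rw [← hδdef]; exact min_le_right _ _
    have h2 : D * δ ≤ D * (2/(D+1)) := mul_le_mul_of_nonneg_left h1 hD
    have h3 : D * (2/(D+1)) ≤ 2 := by
      rw [mul_div_assoc', div_le_iff₀ (by linarith)]
      nlinarith
    linarith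
  have hDδ' : 4*C/(‖l‖ - 1) * δ ≤ 2 := by rw [hLdef, hDdef]; exact hDδ
  have key := la_key g l C δ δ₀ hC hg' hquad hδδ₀ hDδ'
  rw [hLdef, hDdef] at key
  obtain ⟨m, hmdef⟩ : ∃ x : ℝ, ‖μ‖ = x := ⟨_, rfl⟩
  have hm0 : 0 < m := hmdef ▸ hμ0
  have hm1 : m < 1 := hmdef ▸ hμ1
  obtain ⟨n, hndef⟩ : ∃ x : ℝ, ‖ν‖ = x := ⟨_, rfl⟩
  have hn : 0 < n := hndef ▸ norm_pos_iff.mpr hν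
  -- density: find r, t with μ^r * l^t close to ν
  obtain ⟨εν, hενdef⟩ : ∃ x : ℝ, min (ε/(2*ρ)) n = x := ⟨_, rfl⟩
  have hενpos : 0 < εν := by rw [← hενdef]; exact lt_min (by positivity) hn
  have hεν1 : εν ≤ ε/(2*ρ) := by rw [← hενdef]; exact min_le_left _ _
  have hεν2 : εν ≤ n := by rw [← hενdef]; exact min_le_right _ _
  obtain ⟨x, hxS, hxd⟩ := Metric.mem_closure_iff.mp (hdense ν hν) εν hενpos
  obtain ⟨r, t, hrt, rfl⟩ := hxS
  rw [Complex.dist_eq] at hxd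
  have hxd' : ‖μ^r * l^t - ν‖ < εν := by
    rwa [norm_sub_rev] at hxd
  have h2n : m^r * L^t ≤ 2*n := by
    have h1 : ‖μ^r * l^t‖ ≤ ‖μ^r * l^t - ν‖ + ‖ν‖ := by
      have := norm_add_le (μ^r * l^t - ν) ν
      rwa [sub_add_cancel] at this
    have h2 : ‖μ^r * l^t‖ = m^r * L^t := by
      rw [norm_mul, norm_pow, norm_pow, hmdef, hLdef]
    rw [h2, hndef] at h1
    linarith
  -- choose s
  obtain ⟨K, hKdef⟩ : ∃ x : ℝ, 4*D*n^2*ρ^2 + 1 = x := ⟨_, rfl⟩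
  have hK : 1 ≤ K := by
    rw [← hKdef]
    have h0 : (0:ℝ) ≤ 4*D*n^2*ρ^2 :=
      mul_nonneg (mul_nonneg (mul_nonneg (by norm_num) hD) (sq_nonneg n)) (sq_nonneg ρ)
    linarith
  obtain ⟨c, hcdef⟩ : ∃ x : ℝ, min (δ/(4*n*ρ)) (ε/(2*K)) = x := ⟨_, rfl⟩
  have hcpos : 0 < c := by
    rw [← hcdef]
    exact lt_min (by positivity) (by positivity)
  obtain ⟨s, hs⟩ := ((tendsto_pow_atTop_nhds_zero_of_lt_one hm0.le hm1).eventually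
    (gt_mem_nhds hcpos)).exists
  have hmsnn : 0 ≤ m^s := pow_nonneg hm0.le s
  have hms1 : m^s ≤ δ/(4*n*ρ) := by
    refine le_of_lt (lt_of_lt_of_le hs ?_)
    rw [← hcdef]; exact min_le_left _ _
  have hms2 : m^s < ε/(2*K) := by
    refine lt_of_lt_of_le hs ?_
    rw [← hcdef]; exact min_le_right _ _
  refine ⟨r, s, t, fun z hz => ?_⟩
  have hznn : 0 ≤ ‖z‖ := norm_nonneg z
  have hwabs : ‖μ^(r+s) * z‖ = m^(r+s) * ‖z‖ := by
    rw [norm_mul, norm_pow, hmdef]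
  have hwnn : 0 ≤ ‖μ^(r+s) * z‖ := norm_nonneg _
  have hwbound : ‖μ^(r+s) * z‖ ≤ m^r * m^s * ρ := by
    rw [hwabs, pow_add]
    exact mul_le_mul_of_nonneg_left hz (by positivity)
  have hcond : 2 * L^t * ‖μ^(r+s) * z‖ ≤ δ := by
    have hLt : (0:ℝ) < L^t := pow_pos hLpos t
    have h1 := mul_le_mul_of_nonneg_left hwbound (show (0:ℝ) ≤ 2*L^t by positivity)
    have h3 := mul_le_mul_of_nonneg_right h2n (show (0:ℝ) ≤ 2*(m^s*ρ) by positivity)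
    have h4 : m^s * (4*n*ρ) ≤ δ := (le_div_iff₀ (by positivity)).mp hms1
    linarith [h1, h3, h4]
  constructor
  · intro k hk
    have hkt : L^k ≤ L^t := pow_le_pow_right₀ hL.le hk.le
    have hck : 2 * L^k * ‖μ^(r+s) * z‖ ≤ δ := by
      have := mul_le_mul_of_nonneg_right
        (mul_le_mul_of_nonneg_left hkt (by norm_num : (0:ℝ) ≤ 2)) hwnn
      linarith [this, hcond]
    have hb := (key k (μ^(r+s) * z) hck).2
    rw [Metric.mem_ball, Complex.dist_eq, sub_zero]
    calc ‖g^[k] (μ^(r+s) * z)‖ ≤ 2 * L^k * ‖μ^(r+s) * z‖ := hb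
      _ ≤ δ := hck
      _ < R := by linarith
  · obtain ⟨h1, h2⟩ := key t (μ^(r+s) * z) hcond
    have hμne : μ ≠ 0 := by
      intro hcontra
      rw [hcontra] at hμ0
      simp at hμ0
    have hdecomp : (μ^s)⁻¹ * g^[t] (μ^(r+s) * z) - ν * z
        = (μ^s)⁻¹ * (g^[t] (μ^(r+s) * z) - l^t * (μ^(r+s) * z)) + (μ^r * l^t - ν) * z := by
      field_simp
      ring
    have htri : ‖(μ^s)⁻¹ * g^[t] (μ^(r+s) * z) - ν * z‖
        ≤ ‖(μ^s)⁻¹ * (g^[t] (μ^(r+s) * z) - l^t * (μ^(r+s) * z))‖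
          + ‖(μ^r * l^t - ν) * z‖ := by
      rw [hdecomp]
      exact norm_add_le _ _
    have hterm1 : ‖(μ^s)⁻¹ * (g^[t] (μ^(r+s) * z) - l^t * (μ^(r+s) * z))‖ < ε/2 := by
      have e1 : ‖(μ^s)⁻¹ * (g^[t] (μ^(r+s) * z) - l^t * (μ^(r+s) * z))‖
          = (m^s)⁻¹ * ‖g^[t] (μ^(r+s) * z) - l^t * (μ^(r+s) * z)‖ := by
        rw [norm_mul, norm_inv, norm_pow, hmdef]
      rw [e1]
      have hmsinv : (0:ℝ) < (m^s)⁻¹ := by positivity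
      have hwb2 : (‖μ^(r+s) * z‖)^2 ≤ (m^r * m^s * ρ)^2 :=
        pow_le_pow_left₀ hwnn hwbound 2
      have hb1 : (m^s)⁻¹ * ‖g^[t] (μ^(r+s) * z) - l^t * (μ^(r+s) * z)‖
          ≤ (m^s)⁻¹ * (D * L^(2*t) * (m^r * m^s * ρ)^2) := by
        apply mul_le_mul_of_nonneg_left _ hmsinv.le
        calc ‖g^[t] (μ^(r+s) * z) - l^t * (μ^(r+s) * z)‖
            ≤ D * L^(2*t) * (‖μ^(r+s) * z‖)^2 := h1
          _ ≤ D * L^(2*t) * (m^r * m^s * ρ)^2 := by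
              apply mul_le_mul_of_nonneg_left hwb2
              positivity
      have e2 : (m^s)⁻¹ * (D * L^(2*t) * (m^r * m^s * ρ)^2)
          = D * (m^r * L^t)^2 * (m^s * ρ^2) := by
        have hmsne : m^s ≠ 0 := by positivity
        rw [show L^(2*t) = (L^t)^2 by rw [mul_comm, pow_mul]]
        field_simp
      have hb2 : D * (m^r * L^t)^2 * (m^s * ρ^2) ≤ D * (2*n)^2 * (m^s * ρ^2) := by
        have hsq : (m^r * L^t)^2 ≤ (2*n)^2 :=
          pow_le_pow_left₀ (by positivity) h2n 2
        exact mul_le_mul_of_nonneg_right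
          (mul_le_mul_of_nonneg_left hsq hD) (by positivity)
      have hb3 : D * (2*n)^2 * (m^s * ρ^2) < ε/2 := by
        have hKpos : (0:ℝ) < K := by linarith
        have h2K : m^s * (2*K) < ε := (lt_div_iff₀ (by positivity)).mp hms2
        rw [← hKdef] at h2K
        linarith [h2K, hmsnn, mul_nonneg (mul_nonneg (mul_nonneg hD (sq_nonneg n)) (sq_nonneg ρ)) hmsnn]
      calc (m^s)⁻¹ * ‖g^[t] (μ^(r+s) * z) - l^t * (μ^(r+s) * z)‖
          ≤ (m^s)⁻¹ * (D * L^(2*t) * (m^r * m^s * ρ)^2) := hb1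
        _ = D * (m^r * L^t)^2 * (m^s * ρ^2) := e2
        _ ≤ D * (2*n)^2 * (m^s * ρ^2) := hb2
        _ < ε/2 := hb3
    have hterm2 : ‖(μ^r * l^t - ν) * z‖ ≤ ε/2 := by
      rw [norm_mul]
      calc ‖μ^r * l^t - ν‖ * ‖z‖ ≤ (ε/(2*ρ)) * ρ := by
            apply mul_le_mul (le_trans hxd'.le hεν1) hz hznn (by positivity)
        _ = ε/2 := by field_simp
    linarith
end

section
/- Let n ∈ ℕ and let p, q ∈ ℂ[X] be polynomials with deg p ≤ n and deg q ≤ n. Set h = X·p − q, and suppose that h has n+1 distinct roots a₁, …, a_{n+1} in ℂ (equivalently, deg h = n+1 and all roots of h are simple). Then ∑_{j=1}^{n+1} p(a_j)/h'(a_j) = 1, where h' denotes the derivative of h. -/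
open Polynomial

/-- For polynomials `p`, `q` of degree at most `n`, if `h = X·p − q` has `n + 1` distinct
roots `a j`, then `∑ j, p(a j) / h'(a j) = 1`.  (This is the relation `∑ λⱼ = 1` on the
characteristic numbers of the singular points at infinity of a polynomial foliation.) -/
theorem sum_characteristic_numbers_eq_one
    (n : ℕ) (p q : ℂ[X]) (hp : p.degree ≤ n) (hq : q.degree ≤ n)
    (h : ℂ[X]) (hh : h = X * p - q) (hh0 : h ≠ 0)
    (a : Fin (n + 1) → ℂ) (ha : Function.Injective a)
    (hroots : ∀ j, h.eval (a j) = 0) :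
    ∑ j : Fin (n + 1), p.eval (a j) / (Polynomial.derivative h).eval (a j) = 1 := by
  classical
  set s : Finset (Fin (n + 1)) := Finset.univ with hs
  have hcard : s.card = n + 1 := by simp [hs]
  have hvs : Set.InjOn a s := fun x _ y _ hxy => ha hxy
  -- degree of h is at most n+1
  have hdegle : h.degree ≤ (n + 1 : ℕ) := by
    rw [hh]
    refine (degree_sub_le _ _).trans (max_le ?_ (hq.trans ?_))
    · refine (degree_mul_le _ _).trans ?_
      calc (X : ℂ[X]).degree + p.degree ≤ 1 + (n : ℕ) := by
            exact add_le_add degree_X_le hp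
        _ = ((n + 1 : ℕ) : WithBot ℕ) := by
            rw [← Nat.cast_one, ← Nat.cast_add, Nat.add_comm]
      -- done
    · exact_mod_cast WithBot.coe_le_coe.mpr (Nat.le_succ n)
  -- h has at least n+1 roots, hence natDegree h = n+1
  have himage : (Finset.univ.image a).card = n + 1 := by
    rw [Finset.card_image_of_injective _ ha, Finset.card_univ, Fintype.card_fin]
  have hsubset : Finset.univ.image a ⊆ h.roots.toFinset := by
    intro x hx
    rcases Finset.mem_image.mp hx with ⟨j, _, rfl⟩
    simp [Multiset.mem_toFinset, mem_roots, hh0, IsRoot, hroots j]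
  have hnd_ge : n + 1 ≤ h.natDegree := by
    calc n + 1 = (Finset.univ.image a).card := himage.symm
      _ ≤ h.roots.toFinset.card := Finset.card_le_card hsubset
      _ ≤ Multiset.card h.roots := h.roots.toFinset_card_le
      _ ≤ h.natDegree := h.card_roots'
  have hnd : h.natDegree = n + 1 :=
    le_antisymm (natDegree_le_iff_degree_le.mpr hdegle) hnd_ge
  have hdeg : h.degree = (n + 1 : ℕ) := by
    rw [degree_eq_natDegree hh0, hnd]
  -- leading coefficient
  set c : ℂ := h.leadingCoeff with hc
  have hc0 : c ≠ 0 := leadingCoeff_ne_zero.mpr hh0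
  -- c = p.coeff n
  have hcp : c = p.coeff n := by
    rw [hc, leadingCoeff, hnd, hh]
    rw [coeff_sub, coeff_X_mul, coeff_eq_zero_of_degree_lt (lt_of_le_of_lt hq ?_), sub_zero]
    exact_mod_cast WithBot.coe_lt_coe.mpr (Nat.lt_succ_self n)
  -- h = C c * nodal
  set N : ℂ[X] := Lagrange.nodal s a with hN
  have hNdeg : N.degree = (n + 1 : ℕ) := by
    rw [hN, Lagrange.degree_nodal, hcard]
  have hCN : h = C c * N := by
    refine Polynomial.eq_of_degree_le_of_eval_index_eq s hvs ?_ ?_ ?_ ?_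
    · rw [hdeg, hcard]
    · rw [hdeg, degree_C_mul hc0, hNdeg]
    · rw [leadingCoeff_mul, leadingCoeff_C, (Lagrange.nodal_monic).leadingCoeff, mul_one]
    · intro i _
      rw [hroots i, eval_mul, eval_C, hN, Lagrange.eval_nodal_at_node (Finset.mem_univ i),
        mul_zero]
  -- derivative at nodes
  have hderiv : ∀ i : Fin (n + 1),
      (Polynomial.derivative h).eval (a i) = c * (Polynomial.derivative N).eval (a i) := by
    intro i
    rw [hCN, derivative_C_mul, eval_mul, eval_C]
  have hdN : ∀ i : Fin (n + 1), (Polynomial.derivative N).eval (a i) ≠ 0 := by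
    intro i
    have hw := Lagrange.nodalWeight_ne_zero hvs (Finset.mem_univ i)
    rw [Lagrange.nodalWeight_eq_eval_derivative_nodal (Finset.mem_univ i)] at hw
    exact fun hz => hw (by rw [hz, inv_zero])
  -- p is its own interpolant
  have hpinterp : p = Lagrange.interpolate s a fun i => p.eval (a i) := by
    refine Lagrange.eq_interpolate hvs ?_
    rw [hcard]
    exact lt_of_le_of_lt hp (by exact_mod_cast WithBot.coe_lt_coe.mpr (Nat.lt_succ_self n))
  -- coefficient n of the interpolant
  have hcoeff : p.coeff n = ∑ i ∈ s, p.eval (a i) * Lagrange.nodalWeight s a i := by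
    conv_lhs => rw [hpinterp]
    rw [Lagrange.interpolate_apply, finset_sum_coeff]
    refine Finset.sum_congr rfl fun i hi => ?_
    rw [coeff_C_mul]
    congr 1
    have hbasis : Lagrange.basis s a i =
        C (Lagrange.nodalWeight s a i) * Lagrange.nodal (s.erase i) a := by
      rw [Lagrange.basis_eq_prod_sub_inv_mul_nodal_div hi,
        ← Lagrange.nodal_erase_eq_nodal_div hi]
    rw [hbasis, coeff_C_mul]
    have hmon : (Lagrange.nodal (s.erase i) a).Monic := Lagrange.nodal_monic
    have hndN : (Lagrange.nodal (s.erase i) a).natDegree = n := by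
      rw [Lagrange.natDegree_nodal, Finset.card_erase_of_mem hi, hcard]
      omega
    have hcn : (Lagrange.nodal (s.erase i) a).coeff n = 1 := by
      have := hmon.coeff_natDegree
      rwa [hndN] at this
    rw [hcn, mul_one]
  -- put it all together
  have key : ∀ i : Fin (n + 1),
      p.eval (a i) / (Polynomial.derivative h).eval (a i)
        = p.eval (a i) * Lagrange.nodalWeight s a i / c := by
    intro i
    rw [hderiv i, Lagrange.nodalWeight_eq_eval_derivative_nodal (Finset.mem_univ i), ← hN]
    field_simp
  calc ∑ j : Fin (n + 1), p.eval (a j) / (Polynomial.derivative h).eval (a j)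
      = ∑ j : Fin (n + 1), p.eval (a j) * Lagrange.nodalWeight s a j / c := by
        exact Finset.sum_congr rfl fun j _ => key j
    _ = (∑ j ∈ s, p.eval (a j) * Lagrange.nodalWeight s a j) / c := by
        rw [Finset.sum_div]
    _ = p.coeff n / c := by rw [hcoeff]
    _ = 1 := by rw [← hcp, div_self hc0]
end

section
/- Let μ, λ ∈ ℂ with 0 < |μ| < 1 < |λ|, and suppose that the multiplicative semigroup generated by μ and λ, i.e. the set {μ^a λ^b : a, b ∈ ℕ, a + b ≥ 1}, is dense in ℂ ∖ {0}. Then for every ν ∈ ℂ ∖ {0}, every ε > 0 and every N ∈ ℕ, there exist natural numbers r ≥ N and t ≥ N such that |μ^r · λ^t − ν| < ε. -/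
/-- If `0 < |μ| < 1 < |λ|` and the multiplicative semigroup generated by `μ` and `λ` is
dense in `ℂ \ {0}`, then every nonzero `ν` can be approximated by products `μ^r · λ^t`
with both exponents arbitrarily large. -/
theorem dense_semigroup_large_exponents
    (μ lam : ℂ) (hμ0 : 0 < ‖μ‖) (hμ1 : ‖μ‖ < 1)
    (hlam : 1 < ‖lam‖)
    (hdense : ∀ w : ℂ, w ≠ 0 →
      w ∈ closure {x : ℂ | ∃ a b : ℕ, 1 ≤ a + b ∧ x = μ ^ a * lam ^ b}) :
    ∀ ν : ℂ, ν ≠ 0 → ∀ ε : ℝ, 0 < ε → ∀ N : ℕ,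
      ∃ r t : ℕ, N ≤ r ∧ N ≤ t ∧ ‖μ ^ r * lam ^ t - ν‖ < ε := by
  intro ν hν ε hε N
  have hμne : μ ≠ 0 := by
    intro h; simp [h] at hμ0
  have hlamne : lam ≠ 0 := by
    intro h; simp [h] at hlam; linarith
  set c : ℂ := μ ^ N * lam ^ N with hc
  have hcne : c ≠ 0 := mul_ne_zero (pow_ne_zero _ hμne) (pow_ne_zero _ hlamne)
  have hcabs : 0 < ‖c‖ := by
    simpa using (norm_pos_iff.mpr hcne)
  have hν' : ν / c ≠ 0 := div_ne_zero hν hcne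
  have hmem := hdense (ν / c) hν'
  rw [Metric.mem_closure_iff] at hmem
  obtain ⟨x, ⟨a, b, hab, hx⟩, hd⟩ := hmem (ε / ‖c‖) (by positivity)
  refine ⟨a + N, b + N, le_add_self, le_add_self, ?_⟩
  have key : μ ^ (a + N) * lam ^ (b + N) - ν = (x - ν / c) * c := by
    rw [hx]
    field_simp [hc]
    ring
  rw [key]
  have : ‖(x - ν / c) * c‖ = ‖x - ν / c‖ * ‖c‖ := by
    simp [map_mul]
  rw [this]
  have hd' : ‖x - ν / c‖ < ε / ‖c‖ := by
    rw [dist_comm] at hd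
    simpa [Complex.dist_eq] using hd
  calc ‖x - ν / c‖ * ‖c‖
      < (ε / ‖c‖) * ‖c‖ := by
        exact mul_lt_mul_of_pos_right hd' hcabs
    _ = ε := div_mul_cancel₀ ε (ne_of_gt hcabs)
end
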